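/- If a simplicial 2-sphere has a vertex of degree 3 and has more than 4 vertices, then no two vertices of degree 3 are adjacent. -/
import Mathlib


open Finset

/-- A combinatorial simplicial 2-sphere (triangulation of S²): a finite pure
2-dimensional simplicial complex, given by its set of triangles, in which every
edge lies in exactly two triangles, every vertex link is connected (hence a
cycle), the complex is connected, and the Euler characteristic is 2. -/
structure SimplicialTwoSphere (V : Type) [Fintype V] [DecidableEq V] where
  faces : Finset (Finset V)
  card_three : ∀ t ∈ faces, t.card = 3
  covers : ∀ v : V, ∃ t ∈ faces, v ∈ t
  edge_two : ∀ e : Finset V, e.card = 2 → (∃ t ∈ faces, e ⊆ t) →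
      (faces.filter fun t => e ⊆ t).card = 2
  connected : ∀ u w : V,
      (SimpleGraph.fromRel fun a b => ∃ t ∈ faces, a ∈ t ∧ b ∈ t).Reachable u w
  link_connected : ∀ v u w : V,
      (∃ t ∈ faces, v ∈ t ∧ u ∈ t ∧ u ≠ v) →
      (∃ t ∈ faces, v ∈ t ∧ w ∈ t ∧ w ≠ v) →
      (SimpleGraph.fromRel fun a b =>
        ∃ t ∈ faces, v ∈ t ∧ a ∈ t ∧ b ∈ t ∧ a ≠ v ∧ b ≠ v).Reachable u w
  euler : (Fintype.card V : ℤ)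
      - ((faces.biUnion fun t => t.powersetCard 2).card : ℤ) + (faces.card : ℤ) = 2

variable {V : Type} [Fintype V] [DecidableEq V]

/-- The edges of a simplicial 2-sphere. -/
def SimplicialTwoSphere.edges (K : SimplicialTwoSphere V) : Finset (Finset V) :=
  K.faces.biUnion fun t => t.powersetCard 2

/-- The degree of a vertex: the number of incident edges. -/
def SimplicialTwoSphere.degree (K : SimplicialTwoSphere V) (v : V) : ℕ :=
  (K.edges.filter fun e => v ∈ e).card

/-- The number of vertices of degree `k`. -/
def SimplicialTwoSphere.p (K : SimplicialTwoSphere V) (k : ℕ) : ℕ :=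
  (Finset.univ.filter fun v => K.degree v = k).card

set_option maxHeartbeats 4000000

section Aux

lemma aux_walk_closed {G : SimpleGraph V} {S : Set V}
    (hS : ∀ x y, G.Adj x y → x ∈ S → y ∈ S) :
    ∀ {u v : V}, G.Walk u v → u ∈ S → v ∈ S := by
  intro u v p
  induction p with
  | nil => exact id
  | cons h _ ih => exact fun hu => ih (hS _ _ h hu)

lemma aux_filter_pair {α : Type*} [DecidableEq α] {s : Finset α} {p q : α}
    (h : s.card = 2) (hp : p ∈ s) (hq : q ∈ s) (hpq : p ≠ q) : s = {p, q} := by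
  symm
  apply eq_of_subset_of_card_le
  · intro z hz; simp only [mem_insert, mem_singleton] at hz
    rcases hz with rfl | rfl <;> assumption
  · rw [h, card_pair hpq]

lemma aux_exists_second {α : Type*} [DecidableEq α] {s : Finset α} {p : α}
    (h : s.card = 2) (hp : p ∈ s) : ∃ q ∈ s, q ≠ p := by
  obtain ⟨x, y, hxy, rfl⟩ := card_eq_two.mp h
  simp only [mem_insert, mem_singleton] at hp
  rcases hp with rfl | rfl
  · exact ⟨y, by simp, Ne.symm hxy⟩
  · exact ⟨x, by simp, hxy⟩

/-- Structure of a face containing two given distinct vertices. -/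
lemma aux_face_struct (K : SimplicialTwoSphere V) {t : Finset V} (ht : t ∈ K.faces)
    {x y : V} (hx : x ∈ t) (hy : y ∈ t) (hxy : x ≠ y) :
    ∃ z, z ≠ x ∧ z ≠ y ∧ t = {x, y, z} := by
  have hsub : ({x, y} : Finset V) ⊆ t := by
    intro z hz; simp only [mem_insert, mem_singleton] at hz
    rcases hz with rfl | rfl <;> assumption
  have h1 : (t \ {x, y}).card = 1 := by
    rw [card_sdiff_of_subset hsub, K.card_three t ht, card_pair hxy]
  obtain ⟨z, hz⟩ := card_eq_one.mp h1
  have hzm : z ∈ t \ ({x, y} : Finset V) := hz ▸ mem_singleton_self z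
  rw [mem_sdiff, mem_insert, mem_singleton] at hzm
  refine ⟨z, fun h => hzm.2 (Or.inl h), fun h => hzm.2 (Or.inr h), ?_⟩
  have ht' : t = ({x, y} : Finset V) ∪ (t \ {x, y}) := (union_sdiff_of_subset hsub).symm
  rw [ht', hz]
  ext v
  simp only [mem_union, mem_insert, mem_singleton]
  tauto

lemma aux_pair_mem_edges (K : SimplicialTwoSphere V) {t : Finset V} (ht : t ∈ K.faces)
    {x y : V} (hx : x ∈ t) (hy : y ∈ t) (hxy : x ≠ y) : ({x, y} : Finset V) ∈ K.edges := by
  rw [SimplicialTwoSphere.edges, mem_biUnion]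
  refine ⟨t, ht, ?_⟩
  rw [mem_powersetCard]
  constructor
  · intro z hz; simp only [mem_insert, mem_singleton] at hz
    rcases hz with rfl | rfl <;> assumption
  · exact card_pair hxy

/-- For a degree-3 vertex with three known neighbours, every face containing it
lies in the span of those neighbours. -/
lemma aux_deg3_faces (K : SimplicialTwoSphere V) {u w a b : V} (hu : K.degree u = 3)
    (hw : w ≠ u) (ha : a ≠ u) (hb : b ≠ u) (hwa : w ≠ a) (hwb : w ≠ b) (hab : a ≠ b)
    (e1 : ({u, w} : Finset V) ∈ K.edges) (e2 : ({u, a} : Finset V) ∈ K.edges)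
    (e3 : ({u, b} : Finset V) ∈ K.edges) :
    ∀ t ∈ K.faces, u ∈ t → ∀ x ∈ t, x = u ∨ x = w ∨ x = a ∨ x = b := by
  have hne1 : ({u, w} : Finset V) ≠ {u, a} := by
    intro h
    have : w ∈ ({u, a} : Finset V) := h ▸ (by simp)
    simp only [mem_insert, mem_singleton] at this
    rcases this with h' | h'; exacts [hw h', hwa h']
  have hne2 : ({u, w} : Finset V) ≠ {u, b} := by
    intro h
    have : w ∈ ({u, b} : Finset V) := h ▸ (by simp)
    simp only [mem_insert, mem_singleton] at this
    rcases this with h' | h'; exacts [hw h', hwb h']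
  have hne3 : ({u, a} : Finset V) ≠ {u, b} := by
    intro h
    have : a ∈ ({u, b} : Finset V) := h ▸ (by simp)
    simp only [mem_insert, mem_singleton] at this
    rcases this with h' | h'; exacts [ha h', hab h']
  have hcard : ({{u, w}, {u, a}, {u, b}} : Finset (Finset V)).card = 3 := by
    rw [card_insert_of_notMem (by simp [hne1, hne2]),
      card_insert_of_notMem (by simp [hne3]), card_singleton]
  have hsub : ({{u, w}, {u, a}, {u, b}} : Finset (Finset V)) ⊆
      K.edges.filter (fun e => u ∈ e) := by
    intro e he
    simp only [mem_insert, mem_singleton] at he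
    rw [mem_filter]
    rcases he with rfl | rfl | rfl
    · exact ⟨e1, mem_insert_self _ _⟩
    · exact ⟨e2, mem_insert_self _ _⟩
    · exact ⟨e3, mem_insert_self _ _⟩
  have heq : K.edges.filter (fun e => u ∈ e) = {{u, w}, {u, a}, {u, b}} := by
    unfold SimplicialTwoSphere.degree at hu
    exact (eq_of_subset_of_card_le hsub (by rw [hcard, hu])).symm
  intro t ht hut x hx
  by_cases hxu : x = u
  · exact Or.inl hxu
  have hmem : ({u, x} : Finset V) ∈ K.edges.filter (fun e => u ∈ e) :=
    mem_filter.mpr ⟨aux_pair_mem_edges K ht hut hx (fun h => hxu h.symm), mem_insert_self _ _⟩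
  rw [heq] at hmem
  simp only [mem_insert, mem_singleton] at hmem
  have hxmem : x ∈ ({u, x} : Finset V) := by simp
  rcases hmem with h | h | h
  · rw [h] at hxmem; simp only [mem_insert, mem_singleton] at hxmem; tauto
  · rw [h] at hxmem; simp only [mem_insert, mem_singleton] at hxmem; tauto
  · rw [h] at hxmem; simp only [mem_insert, mem_singleton] at hxmem; tauto

end Aux
theorem degree_three_not_adjacent (K : SimplicialTwoSphere V)
    (hv : ∃ v : V, K.degree v = 3) (hm : 4 < Fintype.card V) :
    ∀ u w : V, K.degree u = 3 → K.degree w = 3 → {u, w} ∉ K.edges := by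
  intro u w hu hw he
  -- `u ≠ w`
  have huw : u ≠ w := by
    intro h
    subst h
    rw [SimplicialTwoSphere.edges, mem_biUnion] at he
    obtain ⟨t, _, hmu⟩ := he
    rw [mem_powersetCard] at hmu
    simp at hmu
  -- the two faces on the edge {u, w}
  have hexists : ∃ t ∈ K.faces, ({u, w} : Finset V) ⊆ t := by
    rw [SimplicialTwoSphere.edges, mem_biUnion] at he
    obtain ⟨t, ht, hmu⟩ := he
    rw [mem_powersetCard] at hmu
    exact ⟨t, ht, hmu.1⟩
  have hf := K.edge_two {u, w} (card_pair huw) hexists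
  obtain ⟨t1, t2, ht12, hft⟩ := card_eq_two.mp hf
  have ht1 : t1 ∈ K.faces ∧ ({u, w} : Finset V) ⊆ t1 := by
    have : t1 ∈ K.faces.filter (fun t => ({u, w} : Finset V) ⊆ t) := by rw [hft]; simp
    exact mem_filter.mp this
  have ht2 : t2 ∈ K.faces ∧ ({u, w} : Finset V) ⊆ t2 := by
    have : t2 ∈ K.faces.filter (fun t => ({u, w} : Finset V) ⊆ t) := by rw [hft]; simp
    exact mem_filter.mp this
  obtain ⟨a, hau, haw, ht1e⟩ := aux_face_struct K ht1.1 (ht1.2 (by simp)) (ht1.2 (by simp)) huw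
  obtain ⟨b, hbu, hbw, ht2e⟩ := aux_face_struct K ht2.1 (ht2.2 (by simp)) (ht2.2 (by simp)) huw
  have hab : a ≠ b := by
    intro h
    exact ht12 (by rw [ht1e, ht2e, h])
  -- the two faces explicitly
  have hf1 : ({u, w, a} : Finset V) ∈ K.faces := ht1e ▸ ht1.1
  have hf2 : ({u, w, b} : Finset V) ∈ K.faces := ht2e ▸ ht2.1
  -- edges
  have eUA : ({u, a} : Finset V) ∈ K.edges :=
    aux_pair_mem_edges K hf1 (by simp) (by simp) (Ne.symm hau)
  have eUB : ({u, b} : Finset V) ∈ K.edges :=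
    aux_pair_mem_edges K hf2 (by simp) (by simp) (Ne.symm hbu)
  have eWA : ({w, a} : Finset V) ∈ K.edges :=
    aux_pair_mem_edges K hf1 (by simp) (by simp) (Ne.symm haw)
  have eWB : ({w, b} : Finset V) ∈ K.edges :=
    aux_pair_mem_edges K hf2 (by simp) (by simp) (Ne.symm hbw)
  have eWU : ({w, u} : Finset V) ∈ K.edges := by rw [pair_comm]; exact he
  -- degree-3 structure at u and w
  have Hu : ∀ t ∈ K.faces, u ∈ t → ∀ x ∈ t, x = u ∨ x = w ∨ x = a ∨ x = b :=
    aux_deg3_faces K hu (Ne.symm huw) hau hbu (Ne.symm haw) (Ne.symm hbw) hab he eUA eUB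
  have Hw : ∀ t ∈ K.faces, w ∈ t → ∀ x ∈ t, x = w ∨ x = u ∨ x = a ∨ x = b :=
    aux_deg3_faces K hw huw haw hbw (fun h => hau h.symm) (fun h => hbu h.symm) hab eWU eWA eWB
  -- the faces {u, a, b} and {w, a, b}
  have hsUA1 : ({u, a} : Finset V) ⊆ ({u, w, a} : Finset V) := by
    intro z hz; simp only [mem_insert, mem_singleton] at hz ⊢; tauto
  have hfuab : ({u, a, b} : Finset V) ∈ K.faces := by
    have h2 := K.edge_two {u, a} (card_pair (fun h => hau h.symm)) ⟨{u, w, a}, hf1, hsUA1⟩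
    obtain ⟨t', ht'm, htne⟩ := aux_exists_second h2 (mem_filter.mpr ⟨hf1, hsUA1⟩)
    rw [mem_filter] at ht'm
    obtain ⟨z, hzu, hza, hte⟩ := aux_face_struct K ht'm.1 (ht'm.2 (by simp)) (ht'm.2 (by simp))
      (fun h => hau h.symm)
    have hz4 := Hu t' ht'm.1 (ht'm.2 (by simp)) z (by rw [hte]; simp)
    rcases hz4 with h | h | h | h
    · exact absurd h hzu
    · exfalso; apply htne; rw [hte, h]; ext v
      simp only [mem_insert, mem_singleton]; tauto
    · exact absurd h hza
    · have := ht'm.1; rw [hte, h] at this; exact this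
  have hsWA1 : ({w, a} : Finset V) ⊆ ({u, w, a} : Finset V) := by
    intro z hz; simp only [mem_insert, mem_singleton] at hz ⊢; tauto
  have hfwab : ({w, a, b} : Finset V) ∈ K.faces := by
    have h2 := K.edge_two {w, a} (card_pair (fun h => haw h.symm)) ⟨{u, w, a}, hf1, hsWA1⟩
    obtain ⟨t', ht'm, htne⟩ := aux_exists_second h2 (mem_filter.mpr ⟨hf1, hsWA1⟩)
    rw [mem_filter] at ht'm
    obtain ⟨z, hzw, hza, hte⟩ := aux_face_struct K ht'm.1 (ht'm.2 (by simp)) (ht'm.2 (by simp))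
      (fun h => haw h.symm)
    have hz4 := Hw t' ht'm.1 (ht'm.2 (by simp)) z (by rw [hte]; simp)
    rcases hz4 with h | h | h | h
    · exact absurd h hzw
    · exfalso; apply htne; rw [hte, h]; ext v
      simp only [mem_insert, mem_singleton]; tauto
    · exact absurd h hza
    · have := ht'm.1; rw [hte, h] at this; exact this
  -- distinctness of the four faces, and exact filter computations
  have hne_uwa_uab : ({u, w, a} : Finset V) ≠ {u, a, b} := by
    intro h
    have : w ∈ ({u, a, b} : Finset V) := h ▸ (by simp)
    simp only [mem_insert, mem_singleton] at this
    rcases this with h' | h' | h'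
    exacts [huw h'.symm, haw h'.symm, hbw h'.symm]
  have hne_uwa_wab : ({u, w, a} : Finset V) ≠ {w, a, b} := by
    intro h
    have : u ∈ ({w, a, b} : Finset V) := h ▸ (by simp)
    simp only [mem_insert, mem_singleton] at this
    rcases this with h' | h' | h'
    exacts [huw h', hau h'.symm, hbu h'.symm]
  have hne_uwb_uab : ({u, w, b} : Finset V) ≠ {u, a, b} := by
    intro h
    have : w ∈ ({u, a, b} : Finset V) := h ▸ (by simp)
    simp only [mem_insert, mem_singleton] at this
    rcases this with h' | h' | h'
    exacts [huw h'.symm, haw h'.symm, hbw h'.symm]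
  have hne_uwb_wab : ({u, w, b} : Finset V) ≠ {w, a, b} := by
    intro h
    have : u ∈ ({w, a, b} : Finset V) := h ▸ (by simp)
    simp only [mem_insert, mem_singleton] at this
    rcases this with h' | h' | h'
    exacts [huw h', hau h'.symm, hbu h'.symm]
  have hne_uab_wab : ({u, a, b} : Finset V) ≠ {w, a, b} := by
    intro h
    have : u ∈ ({w, a, b} : Finset V) := h ▸ (by simp)
    simp only [mem_insert, mem_singleton] at this
    rcases this with h' | h' | h'
    exacts [huw h', hau h'.symm, hbu h'.symm]
  have subtac : ∀ (x y : V) (t : Finset V), x ∈ t → y ∈ t → ({x, y} : Finset V) ⊆ t := by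
    intro x y t hx hy z hz
    simp only [mem_insert, mem_singleton] at hz
    rcases hz with rfl | rfl <;> assumption
  have Fua : K.faces.filter (fun t => ({u, a} : Finset V) ⊆ t) = {{u, w, a}, {u, a, b}} :=
    aux_filter_pair (K.edge_two {u, a} (card_pair (fun h => hau h.symm)) ⟨_, hf1, hsUA1⟩)
      (mem_filter.mpr ⟨hf1, hsUA1⟩)
      (mem_filter.mpr ⟨hfuab, subtac u a _ (by simp) (by simp)⟩) hne_uwa_uab
  have Fwa : K.faces.filter (fun t => ({w, a} : Finset V) ⊆ t) = {{u, w, a}, {w, a, b}} :=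
    aux_filter_pair (K.edge_two {w, a} (card_pair (fun h => haw h.symm)) ⟨_, hf1, hsWA1⟩)
      (mem_filter.mpr ⟨hf1, hsWA1⟩)
      (mem_filter.mpr ⟨hfwab, subtac w a _ (by simp) (by simp)⟩) hne_uwa_wab
  have Fub : K.faces.filter (fun t => ({u, b} : Finset V) ⊆ t) = {{u, w, b}, {u, a, b}} :=
    aux_filter_pair
      (K.edge_two {u, b} (card_pair (fun h => hbu h.symm))
        ⟨_, hf2, subtac u b _ (by simp) (by simp)⟩)
      (mem_filter.mpr ⟨hf2, subtac u b _ (by simp) (by simp)⟩)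
      (mem_filter.mpr ⟨hfuab, subtac u b _ (by simp) (by simp)⟩) hne_uwb_uab
  have Fwb : K.faces.filter (fun t => ({w, b} : Finset V) ⊆ t) = {{u, w, b}, {w, a, b}} :=
    aux_filter_pair
      (K.edge_two {w, b} (card_pair (fun h => hbw h.symm))
        ⟨_, hf2, subtac w b _ (by simp) (by simp)⟩)
      (mem_filter.mpr ⟨hf2, subtac w b _ (by simp) (by simp)⟩)
      (mem_filter.mpr ⟨hfwab, subtac w b _ (by simp) (by simp)⟩) hne_uwb_wab
  have Fab : K.faces.filter (fun t => ({a, b} : Finset V) ⊆ t) = {{u, a, b}, {w, a, b}} :=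
    aux_filter_pair
      (K.edge_two {a, b} (card_pair hab)
        ⟨_, hfuab, subtac a b _ (by simp) (by simp)⟩)
      (mem_filter.mpr ⟨hfuab, subtac a b _ (by simp) (by simp)⟩)
      (mem_filter.mpr ⟨hfwab, subtac a b _ (by simp) (by simp)⟩) hne_uab_wab
  -- link spreading at a : every face containing a lies in {u, w, a, b}
  have Ha : ∀ t ∈ K.faces, a ∈ t → ∀ x ∈ t, x = u ∨ x = w ∨ x = a ∨ x = b := by
    intro t ht hat x hx
    by_cases hxa : x = a
    · tauto
    have hreach := K.link_connected a u x
      ⟨{u, w, a}, hf1, by simp, by simp, Ne.symm hau⟩ ⟨t, ht, hat, hx, hxa⟩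
    obtain ⟨p⟩ := hreach
    have hx' : x ∈ ({y | y = u ∨ y = w ∨ y = b} : Set V) := by
      refine aux_walk_closed ?_ p (Or.inl rfl)
      intro y z hadj hy
      rw [SimpleGraph.fromRel_adj] at hadj
      obtain ⟨hyz, hcase⟩ := hadj
      have hface : ∃ t' ∈ K.faces, a ∈ t' ∧ y ∈ t' ∧ z ∈ t' ∧ z ≠ a := by
        rcases hcase with ⟨t', ht', h1, h2, h3, h4, h5⟩ | ⟨t', ht', h1, h2, h3, h4, h5⟩
        exacts [⟨t', ht', h1, h2, h3, h5⟩, ⟨t', ht', h1, h3, h2, h4⟩]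
      obtain ⟨t', ht', hat', hyt', hzt', hza⟩ := hface
      rcases hy with rfl | rfl | rfl
      · have hmem : t' ∈ K.faces.filter (fun s => ({y, a} : Finset V) ⊆ s) :=
          mem_filter.mpr ⟨ht', subtac y a _ hyt' hat'⟩
        rw [Fua] at hmem
        simp only [mem_insert, mem_singleton] at hmem
        rcases hmem with h | h <;> rw [h] at hzt' <;>
          simp only [mem_insert, mem_singleton] at hzt' <;> tauto
      · have hmem : t' ∈ K.faces.filter (fun s => ({y, a} : Finset V) ⊆ s) :=
          mem_filter.mpr ⟨ht', subtac y a _ hyt' hat'⟩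
        rw [Fwa] at hmem
        simp only [mem_insert, mem_singleton] at hmem
        rcases hmem with h | h <;> rw [h] at hzt' <;>
          simp only [mem_insert, mem_singleton] at hzt' <;> tauto
      · have hmem : t' ∈ K.faces.filter (fun s => ({a, y} : Finset V) ⊆ s) :=
          mem_filter.mpr ⟨ht', subtac a y _ hat' hyt'⟩
        rw [Fab] at hmem
        simp only [mem_insert, mem_singleton] at hmem
        rcases hmem with h | h <;> rw [h] at hzt' <;>
          simp only [mem_insert, mem_singleton] at hzt' <;> tauto
    simp only [Set.mem_setOf_eq] at hx'
    tauto
  -- link spreading at b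
  have Hb : ∀ t ∈ K.faces, b ∈ t → ∀ x ∈ t, x = u ∨ x = w ∨ x = a ∨ x = b := by
    intro t ht hbt x hx
    by_cases hxb : x = b
    · tauto
    have hreach := K.link_connected b u x
      ⟨{u, w, b}, hf2, by simp, by simp, Ne.symm hbu⟩ ⟨t, ht, hbt, hx, hxb⟩
    obtain ⟨p⟩ := hreach
    have hx' : x ∈ ({y | y = u ∨ y = w ∨ y = a} : Set V) := by
      refine aux_walk_closed ?_ p (Or.inl rfl)
      intro y z hadj hy
      rw [SimpleGraph.fromRel_adj] at hadj
      obtain ⟨hyz, hcase⟩ := hadj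
      have hface : ∃ t' ∈ K.faces, b ∈ t' ∧ y ∈ t' ∧ z ∈ t' ∧ z ≠ b := by
        rcases hcase with ⟨t', ht', h1, h2, h3, h4, h5⟩ | ⟨t', ht', h1, h2, h3, h4, h5⟩
        exacts [⟨t', ht', h1, h2, h3, h5⟩, ⟨t', ht', h1, h3, h2, h4⟩]
      obtain ⟨t', ht', hbt', hyt', hzt', hzb⟩ := hface
      rcases hy with rfl | rfl | rfl
      · have hmem : t' ∈ K.faces.filter (fun s => ({y, b} : Finset V) ⊆ s) :=
          mem_filter.mpr ⟨ht', subtac y b _ hyt' hbt'⟩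
        rw [Fub] at hmem
        simp only [mem_insert, mem_singleton] at hmem
        rcases hmem with h | h <;> rw [h] at hzt' <;>
          simp only [mem_insert, mem_singleton] at hzt' <;> tauto
      · have hmem : t' ∈ K.faces.filter (fun s => ({y, b} : Finset V) ⊆ s) :=
          mem_filter.mpr ⟨ht', subtac y b _ hyt' hbt'⟩
        rw [Fwb] at hmem
        simp only [mem_insert, mem_singleton] at hmem
        rcases hmem with h | h <;> rw [h] at hzt' <;>
          simp only [mem_insert, mem_singleton] at hzt' <;> tauto
      · have hmem : t' ∈ K.faces.filter (fun s => ({y, b} : Finset V) ⊆ s) :=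
          mem_filter.mpr ⟨ht', subtac y b _ hyt' hbt'⟩
        rw [Fab] at hmem
        simp only [mem_insert, mem_singleton] at hmem
        rcases hmem with h | h <;> rw [h] at hzt' <;>
          simp only [mem_insert, mem_singleton] at hzt' <;> tauto
    simp only [Set.mem_setOf_eq] at hx'
    tauto
  -- global connectivity: every vertex is one of u, w, a, b
  have hall : ∀ v : V, v = u ∨ v = w ∨ v = a ∨ v = b := by
    intro v
    obtain ⟨p⟩ := K.connected u v
    have hv' : v ∈ ({y | y = u ∨ y = w ∨ y = a ∨ y = b} : Set V) := by
      refine aux_walk_closed ?_ p (Or.inl rfl)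
      intro y z hadj hy
      rw [SimpleGraph.fromRel_adj] at hadj
      obtain ⟨hyz, hcase⟩ := hadj
      have hface : ∃ t ∈ K.faces, y ∈ t ∧ z ∈ t := by
        rcases hcase with ⟨t, ht, h1, h2⟩ | ⟨t, ht, h1, h2⟩
        exacts [⟨t, ht, h1, h2⟩, ⟨t, ht, h2, h1⟩]
      obtain ⟨t, ht, hyt, hzt⟩ := hface
      rcases hy with rfl | rfl | rfl | rfl
      · exact Hu t ht hyt z hzt
      · rcases Hw t ht hyt z hzt with h | h | h | h <;> tauto
      · exact Ha t ht hyt z hzt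
      · exact Hb t ht hyt z hzt
    simpa using hv'
  have hsub : (univ : Finset V) ⊆ ({u, w, a, b} : Finset V) := by
    intro v _
    simp only [mem_insert, mem_singleton]
    exact hall v
  have hle := card_le_card hsub
  rw [card_univ] at hle
  have c1 := card_insert_le u ({w, a, b} : Finset V)
  have c2 := card_insert_le w ({a, b} : Finset V)
  have c3 := card_insert_le a ({b} : Finset V)
  have c4 : ({b} : Finset V).card = 1 := card_singleton b
  omega
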